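/- arXiv:1203.6328 — 2 statements merged into one kernel-verified Lean document; each statement's English description precedes it below -/
import Mathlib

section
/- Let n ≥ 2 and g ∈ SL(n,ℝ). Let y₁,…,y_{n−1} > 0 be the Iwasawa coordinates of g, i.e. g = x·a_{y₁,…,y_{n−1}}·ξ with x ∈ N(n,ℝ) and ξ ∈ SO(n,ℝ). Then e^{−2σ(g)} ≤ y₁ ≤ e^{2σ(g)}, and for every j with 2 ≤ j ≤ n−1 one has e^{−4σ(g)} ≤ y_j ≤ e^{4σ(g)}. -/
open scoped BigOperators
open Matrix

lemma qpres {n : ℕ} {M : Matrix (Fin n) (Fin n) ℝ} (h : M.transpose * M = 1)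
    (v : Fin n → ℝ) : ∑ i, (M.mulVec v i) ^ 2 = ∑ i, v i ^ 2 := by
  have h1 : M.mulVec v ⬝ᵥ M.mulVec v = v ⬝ᵥ v := by
    rw [Matrix.dotProduct_mulVec, ← Matrix.mulVec_transpose, Matrix.mulVec_mulVec, h,
      Matrix.one_mulVec]
  simpa [dotProduct, sq] using h1

/-- `N(n,ℝ)`: real upper triangular matrices with all diagonal entries equal to `1`. -/
def IsUnipotentUpper {n : ℕ} (x : Matrix (Fin n) (Fin n) ℝ) : Prop :=
  (∀ i j : Fin n, j < i → x i j = 0) ∧ ∀ i : Fin n, x i i = 1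

/-- membership in `SO(n,ℝ)`. -/
def IsSpecialOrthogonal {n : ℕ} (ξ : Matrix (Fin n) (Fin n) ℝ) : Prop :=
  ξ * ξ.transpose = 1 ∧ ξ.det = 1

/-- The determinant-one diagonal matrix `a_{y₁,…,y_{n−1}}`:
`(∏_{j=1}^{n−1} y_j^{n−j})^{−1/n} · diag(y₁⋯y_{n−1}, y₁⋯y_{n−2}, …, y₁, 1)`. -/
noncomputable def iwasawaA (n : ℕ) (y : ℕ → ℝ) : Matrix (Fin n) (Fin n) ℝ :=
  ((∏ j ∈ Finset.Icc 1 (n - 1), (y j) ^ ((n : ℝ) - j)) ^ (-(1 / (n : ℝ)))) •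
    Matrix.diagonal (fun i : Fin n => ∏ k ∈ Finset.Icc 1 (n - 1 - i.val), y k)

/-- Bounds on the Iwasawa coordinates of `g ∈ SL(n,ℝ)` in terms of the
polar height `σ(g) = √(a₁²+⋯+aₙ²)` of any polar decomposition
`g = ξ₁ · exp(diag a) · ξ₂`. -/
theorem stmt0 (n : ℕ) (hn : 2 ≤ n)
    (g x ξ ξ₁ ξ₂ : Matrix (Fin n) (Fin n) ℝ) (a : Fin n → ℝ) (y : ℕ → ℝ)
    (hgdet : g.det = 1)
    (hξ₁ : IsSpecialOrthogonal ξ₁) (hξ₂ : IsSpecialOrthogonal ξ₂)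
    (ha : ∑ i, a i = 0)
    (hpolar : g = ξ₁ * Matrix.diagonal (fun i => Real.exp (a i)) * ξ₂)
    (hx : IsUnipotentUpper x)
    (hy : ∀ j, 1 ≤ j → j ≤ n - 1 → 0 < y j)
    (hξ : IsSpecialOrthogonal ξ)
    (hiw : g = x * iwasawaA n y * ξ) :
    (Real.exp (-(2 * Real.sqrt (∑ i, (a i) ^ 2))) ≤ y 1 ∧
      y 1 ≤ Real.exp (2 * Real.sqrt (∑ i, (a i) ^ 2))) ∧
    ∀ j, 2 ≤ j → j ≤ n - 1 →
      Real.exp (-(4 * Real.sqrt (∑ i, (a i) ^ 2))) ≤ y j ∧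
      y j ≤ Real.exp (4 * Real.sqrt (∑ i, (a i) ^ 2)) := by
  set σ : ℝ := Real.sqrt (∑ i, (a i) ^ 2) with hσdef
  have hσ0 : 0 ≤ σ := Real.sqrt_nonneg _
  have habs : ∀ i, |a i| ≤ σ := by
    intro i
    rw [← Real.sqrt_sq_eq_abs]
    exact Real.sqrt_le_sqrt (Finset.single_le_sum (f := fun i => (a i) ^ 2)
      (fun i _ => sq_nonneg _) (Finset.mem_univ i))
  -- orthogonality facts
  have hξ1t : ξ₁ᵀ * ξ₁ = 1 := mul_eq_one_comm.mp hξ₁.1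
  have hξ2t : ξ₂ᵀ * ξ₂ = 1 := mul_eq_one_comm.mp hξ₂.1
  have hξt : ξᵀ * ξ = 1 := mul_eq_one_comm.mp hξ.1
  have hξtt : (ξᵀ)ᵀ * ξᵀ = 1 := by rw [Matrix.transpose_transpose]; exact hξ.1
  -- quadratic form bounds for g
  have hgu : ∀ v : Fin n → ℝ,
      ∑ i, (g.mulVec v i) ^ 2 ≤ Real.exp σ ^ 2 * ∑ i, v i ^ 2 := by
    intro v
    have hsplit : g.mulVec v
        = ξ₁.mulVec ((Matrix.diagonal (fun i => Real.exp (a i))).mulVec (ξ₂.mulVec v)) := by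
      rw [hpolar, Matrix.mulVec_mulVec, Matrix.mulVec_mulVec]
    rw [hsplit, qpres hξ1t]
    have hDv : ∀ w : Fin n → ℝ,
        ∑ i, ((Matrix.diagonal (fun i => Real.exp (a i))).mulVec w i) ^ 2
          = ∑ i, (Real.exp (a i)) ^ 2 * (w i) ^ 2 := by
      intro w
      refine Finset.sum_congr rfl fun i _ => ?_
      rw [Matrix.mulVec_diagonal]; ring
    rw [hDv]
    calc ∑ i, (Real.exp (a i)) ^ 2 * (ξ₂.mulVec v i) ^ 2
        ≤ ∑ i, Real.exp σ ^ 2 * (ξ₂.mulVec v i) ^ 2 := by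
          refine Finset.sum_le_sum fun i _ => ?_
          have h1 : Real.exp (a i) ≤ Real.exp σ :=
            Real.exp_le_exp.mpr ((le_abs_self _).trans (habs i))
          have h2 : (0:ℝ) ≤ Real.exp (a i) := (Real.exp_pos _).le
          exact mul_le_mul_of_nonneg_right (pow_le_pow_left₀ h2 h1 2) (sq_nonneg _)
      _ = Real.exp σ ^ 2 * ∑ i, (ξ₂.mulVec v i) ^ 2 := by rw [Finset.mul_sum]
      _ = Real.exp σ ^ 2 * ∑ i, v i ^ 2 := by rw [qpres hξ2t]
  have hgl : ∀ v : Fin n → ℝ,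
      Real.exp (-σ) ^ 2 * ∑ i, v i ^ 2 ≤ ∑ i, (g.mulVec v i) ^ 2 := by
    intro v
    have hsplit : g.mulVec v
        = ξ₁.mulVec ((Matrix.diagonal (fun i => Real.exp (a i))).mulVec (ξ₂.mulVec v)) := by
      rw [hpolar, Matrix.mulVec_mulVec, Matrix.mulVec_mulVec]
    rw [hsplit, qpres hξ1t]
    have hDv : ∑ i, ((Matrix.diagonal (fun i => Real.exp (a i))).mulVec (ξ₂.mulVec v) i) ^ 2
          = ∑ i, (Real.exp (a i)) ^ 2 * (ξ₂.mulVec v i) ^ 2 := by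
      refine Finset.sum_congr rfl fun i _ => ?_
      rw [Matrix.mulVec_diagonal]; ring
    rw [hDv, ← qpres hξ2t v, Finset.mul_sum]
    refine Finset.sum_le_sum fun i _ => ?_
    have h1 : Real.exp (-σ) ≤ Real.exp (a i) :=
      Real.exp_le_exp.mpr (neg_le_of_abs_le (habs i))
    have h2 : (0:ℝ) ≤ Real.exp (-σ) := (Real.exp_pos _).le
    exact mul_le_mul_of_nonneg_right (pow_le_pow_left₀ h2 h1 2) (sq_nonneg _)
  -- normalizing constant
  set r : ℝ := ((∏ j ∈ Finset.Icc 1 (n - 1), (y j) ^ ((n : ℝ) - j)) ^ (-(1 / (n : ℝ))))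
    with hrdef
  have hr : 0 < r := by
    apply Real.rpow_pos_of_pos
    apply Finset.prod_pos
    intro j hj
    rw [Finset.mem_Icc] at hj
    exact Real.rpow_pos_of_pos (hy j hj.1 hj.2) _
  -- diagonal entries
  set d : Fin n → ℝ := fun i => r * ∏ k ∈ Finset.Icc 1 (n - 1 - i.val), y k with hddef
  have hd : ∀ i, 0 < d i := by
    intro i
    apply mul_pos hr
    apply Finset.prod_pos
    intro k hk
    rw [Finset.mem_Icc] at hk
    exact hy k hk.1 (by omega)
  -- the triangular matrix T
  set T : Matrix (Fin n) (Fin n) ℝ := x * iwasawaA n y with hTdef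
  have hTapp : ∀ i j : Fin n, T i j = r * (x i j * ∏ k ∈ Finset.Icc 1 (n - 1 - j.val), y k) := by
    intro i j
    simp [hTdef, iwasawaA, Matrix.mul_smul, Matrix.smul_apply, Matrix.mul_diagonal,
      smul_eq_mul, hrdef]
  have hTlt : ∀ i j : Fin n, j < i → T i j = 0 := by
    intro i j hij
    rw [hTapp, hx.1 i j hij]; ring
  have hTdiag : ∀ i : Fin n, T i i = d i := by
    intro i
    rw [hTapp, hx.2 i, hddef]; ring
  have hgT : g * ξᵀ = T := by
    rw [hiw, Matrix.mul_assoc (x * iwasawaA n y), hξ.1, Matrix.mul_one]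
  have hmulT : ∀ v : Fin n → ℝ, T.mulVec v = g.mulVec (ξᵀ.mulVec v) := by
    intro v
    rw [← hgT, ← Matrix.mulVec_mulVec]
  -- upper bound on diagonal entries
  have hdu : ∀ i : Fin n, d i ≤ Real.exp σ := by
    intro i
    have h1 : (T.mulVec (Pi.single i 1)) i = d i := by
      rw [Matrix.mulVec_single]
      simpa using hTdiag i
    have h2 : d i ^ 2 ≤ ∑ j, (T.mulVec (Pi.single i 1) j) ^ 2 := by
      rw [← h1]
      exact Finset.single_le_sum (f := fun j => (T.mulVec (Pi.single i 1) j) ^ 2)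
        (fun j _ => sq_nonneg _) (Finset.mem_univ i)
    have h3 : ∑ j, (T.mulVec (Pi.single i 1) j) ^ 2 ≤ Real.exp σ ^ 2 * 1 := by
      rw [hmulT]
      have := hgu (ξᵀ.mulVec (Pi.single i 1))
      rw [qpres hξtt] at this
      simpa [Pi.single_apply, ite_pow, Finset.sum_ite_eq'] using this
    have h4 : d i ^ 2 ≤ Real.exp σ ^ 2 := by linarith
    nlinarith [hd i, Real.exp_pos σ]
  -- inverse of T
  set S : Matrix (Fin n) (Fin n) ℝ :=
    ξ * ξ₂ᵀ * Matrix.diagonal (fun i => Real.exp (-a i)) * ξ₁ᵀ with hSdef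
  have hDD : (Matrix.diagonal fun i => Real.exp (a i)) *
      (Matrix.diagonal fun i => Real.exp (-a i)) = 1 := by
    rw [Matrix.diagonal_mul_diagonal]
    have : (fun i => Real.exp (a i) * Real.exp (-a i)) = fun _ : Fin n => (1:ℝ) := by
      funext i; rw [← Real.exp_add]; simp
    rw [this, Matrix.diagonal_one]
  have hTS : T * S = 1 := by
    have e1 : T * S = g * (ξᵀ * ξ) *
        (ξ₂ᵀ * (Matrix.diagonal (fun i => Real.exp (-a i)) * ξ₁ᵀ)) := by
      rw [← hgT, hSdef]
      simp only [Matrix.mul_assoc]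
    rw [e1, hξt, Matrix.mul_one, hpolar]
    calc ξ₁ * Matrix.diagonal (fun i => Real.exp (a i)) * ξ₂ *
        (ξ₂ᵀ * (Matrix.diagonal (fun i => Real.exp (-a i)) * ξ₁ᵀ))
        = ξ₁ * ((Matrix.diagonal (fun i => Real.exp (a i)) *
            (ξ₂ * ξ₂ᵀ)) * (Matrix.diagonal (fun i => Real.exp (-a i)) * ξ₁ᵀ)) := by
          simp only [Matrix.mul_assoc]
      _ = ξ₁ * ((Matrix.diagonal (fun i => Real.exp (a i)) *
            Matrix.diagonal (fun i => Real.exp (-a i))) * ξ₁ᵀ) := by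
          rw [hξ₂.1, Matrix.mul_one, Matrix.mul_assoc]
      _ = 1 := by rw [hDD, Matrix.one_mul, hξ₁.1]
  -- lower bound on diagonal entries
  have hdl : ∀ i : Fin n, Real.exp (-σ) ≤ d i := by
    intro i
    set c : Fin n → ℝ := S.mulVec (Pi.single i 1) with hcdef
    have hTc : T.mulVec c = Pi.single i 1 := by
      rw [hcdef, Matrix.mulVec_mulVec, hTS, Matrix.one_mulVec]
    have hrow : ∀ j : Fin n, (Pi.single i 1 : Fin n → ℝ) j = ∑ k, T j k * c k := by
      intro j
      rw [← hTc]
      rfl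
    have main : ∀ m : ℕ, ∀ j : Fin n, i < j → n - 1 - j.val < m → c j = 0 := by
      intro m
      induction m with
      | zero => intro j _ hlt; omega
      | succ m ih =>
        intro j hij hlt
        have hz : ∀ k : Fin n, k ≠ j → T j k * c k = 0 := by
          intro k hk
          rcases lt_or_gt_of_ne hk with h | h
          · rw [hTlt j k h, zero_mul]
          · have hik : i < k := lt_trans hij h
            have : (j : ℕ) < (k : ℕ) := h
            rw [ih k hik (by omega), mul_zero]
        have hsum : (Pi.single i 1 : Fin n → ℝ) j = T j j * c j := by
          rw [hrow j]
          exact Finset.sum_eq_single j (fun k _ hk => hz k hk)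
            (fun h => absurd (Finset.mem_univ j) h)
        have hzero : (Pi.single i 1 : Fin n → ℝ) j = 0 :=
          Pi.single_eq_of_ne hij.ne' 1
        rw [hzero, hTdiag] at hsum
        have := hd j
        have : c j = 0 := by
          rcases mul_eq_zero.mp hsum.symm with h | h
          · exact absurd h (ne_of_gt (hd j))
          · exact h
        exact this
    have hci : d i * c i = 1 := by
      have hsum : (Pi.single i 1 : Fin n → ℝ) i = T i i * c i := by
        rw [hrow i]
        refine Finset.sum_eq_single i (fun k _ hk => ?_) (fun h => absurd (Finset.mem_univ i) h)
        rcases lt_or_gt_of_ne hk with h | h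
        · rw [hTlt i k h, zero_mul]
        · rw [main n k h (by omega), mul_zero]
      rw [Pi.single_eq_same, hTdiag] at hsum
      exact hsum.symm
    -- quadratic bound
    have h1 : Real.exp (-σ) ^ 2 * ∑ j, c j ^ 2 ≤ 1 := by
      have := hgl (ξᵀ.mulVec c)
      rw [qpres hξtt, ← hmulT, hTc] at this
      simpa [Pi.single_apply, ite_pow, Finset.sum_ite_eq'] using this
    have h2 : c i ^ 2 ≤ ∑ j, c j ^ 2 :=
      Finset.single_le_sum (f := fun j => c j ^ 2) (fun j _ => sq_nonneg _) (Finset.mem_univ i)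
    have h3 : Real.exp (-σ) ^ 2 * c i ^ 2 ≤ 1 := by
      nlinarith [sq_nonneg (Real.exp (-σ))]
    -- d i * c i = 1, d i > 0, so c i = 1 / d i
    have hdi := hd i
    have hcieq : c i = 1 / d i := by field_simp; linarith [hci]
    rw [hcieq] at h3
    have h6 : Real.exp (-σ) ^ 2 ≤ d i ^ 2 := by
      have h7 : Real.exp (-σ) ^ 2 / d i ^ 2 ≤ 1 := by
        rw [div_eq_mul_inv, ← one_div]
        simpa [div_pow] using h3
      calc Real.exp (-σ) ^ 2 = Real.exp (-σ) ^ 2 / d i ^ 2 * d i ^ 2 := by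
            field_simp
        _ ≤ 1 * d i ^ 2 := mul_le_mul_of_nonneg_right h7 (sq_nonneg _)
        _ = d i ^ 2 := one_mul _
    nlinarith [Real.exp_pos (-σ)]
  -- main bound on every Iwasawa coordinate
  have hbound : ∀ j : ℕ, 1 ≤ j → j ≤ n - 1 →
      Real.exp (-(2 * σ)) ≤ y j ∧ y j ≤ Real.exp (2 * σ) := by
    intro j hj1 hj2
    have hlt1 : n - 1 - j < n := by omega
    have hlt2 : n - j < n := by omega
    set i₁ : Fin n := ⟨n - 1 - j, hlt1⟩ with hi₁
    set i₂ : Fin n := ⟨n - j, hlt2⟩ with hi₂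
    have hsplit : ∏ k ∈ Finset.Icc 1 j, y k
        = (∏ k ∈ Finset.Icc 1 (j - 1), y k) * y j := by
      have hj : j - 1 + 1 = j := by omega
      rw [← hj, Finset.prod_Icc_succ_top (by omega), hj]
    have hrel : d i₁ = d i₂ * y j := by
      have e1 : n - 1 - (i₁ : ℕ) = j := by simp only [i₁]; omega
      have e2 : n - 1 - (i₂ : ℕ) = j - 1 := by simp only [i₂]; omega
      simp only [hddef, e1, e2]
      rw [hsplit]; ring
    have h1l := hdl i₁
    have h2u := hdu i₂
    have h1u := hdu i₁
    have h2l := hdl i₂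
    have hyj : 0 < y j := hy j hj1 hj2
    have hAB : Real.exp (-σ) * Real.exp σ = 1 := by
      rw [← Real.exp_add]; simp
    have hA2 : Real.exp σ * Real.exp σ = Real.exp (2 * σ) := by
      rw [← Real.exp_add]; ring_nf
    have hB2 : Real.exp (-σ) * Real.exp (-σ) = Real.exp (-(2 * σ)) := by
      rw [← Real.exp_add]; ring_nf
    have hd1 := hd i₁
    have hd2 := hd i₂
    have hApos := Real.exp_pos σ
    have hBpos := Real.exp_pos (-σ)
    constructor
    · -- exp(-(2σ)) ≤ y j
      have hs1 : Real.exp (-σ) ≤ Real.exp σ * y j := by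
        calc Real.exp (-σ) ≤ d i₂ * y j := hrel ▸ h1l
          _ ≤ Real.exp σ * y j := mul_le_mul_of_nonneg_right h2u hyj.le
      calc Real.exp (-(2 * σ)) = Real.exp (-σ) * Real.exp (-σ) := hB2.symm
        _ ≤ Real.exp (-σ) * (Real.exp σ * y j) :=
            mul_le_mul_of_nonneg_left hs1 hBpos.le
        _ = Real.exp (-σ) * Real.exp σ * y j := by ring
        _ = y j := by rw [hAB, one_mul]
    · -- y j ≤ exp(2σ)
      have hs1 : Real.exp (-σ) * y j ≤ Real.exp σ := by
        calc Real.exp (-σ) * y j ≤ d i₂ * y j := mul_le_mul_of_nonneg_right h2l hyj.le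
          _ = d i₁ := hrel.symm
          _ ≤ Real.exp σ := h1u
      calc y j = Real.exp σ * Real.exp (-σ) * y j := by
            rw [mul_comm (Real.exp σ), hAB, one_mul]
        _ = Real.exp σ * (Real.exp (-σ) * y j) := by ring
        _ ≤ Real.exp σ * Real.exp σ := mul_le_mul_of_nonneg_left hs1 hApos.le
        _ = Real.exp (2 * σ) := hA2
  refine ⟨hbound 1 le_rfl (by omega), fun j hj2 hjn => ?_⟩
  obtain ⟨hl, hu⟩ := hbound j (by omega) hjn
  constructor
  · exact le_trans (Real.exp_le_exp.mpr (by nlinarith)) hl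
  · exact le_trans hu (Real.exp_le_exp.mpr (by nlinarith))
end

section
/- Let n ≥ 2 be an integer, δ > 0, and let ℓ = (ℓ₁,…,ℓₙ) ∈ ℂⁿ satisfy ℓ₁+⋯+ℓₙ = 0 and |Re(ℓⱼ)| < 1/2 for every j. Then for all real numbers t₁,…,tₙ with |tⱼ| ≤ δ for every j, one has |exp(Σ_{j=1}^n (ℓⱼ + (n−2j+1)/2)·tⱼ) − 1| < (4·(e^{n(n+6)δ/4} − 1)/(n(n+6))) · Σ_{j=1}^n |ℓⱼ + (n−2j+1)/2|. -/
open scoped BigOperators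

lemma abssum_aux : ∀ n : ℕ, (∑ i ∈ Finset.range n, |(n : ℝ) - 1 - 2 * i|) * 2 ≤ (n : ℝ) ^ 2 := by
  intro n
  induction n using Nat.strong_induction_on with
  | _ n ih =>
    match n with
    | 0 => simp
    | 1 => norm_num
    | (m + 2) =>
      have key : (∑ i ∈ Finset.range (m + 2), |((m + 2 : ℕ) : ℝ) - 1 - 2 * i|)
          = (∑ i ∈ Finset.range m, |((m : ℕ) : ℝ) - 1 - 2 * i|) + 2 * ((m : ℝ) + 1) := by
        rw [Finset.sum_range_succ']
        have h0 : |((m + 2 : ℕ) : ℝ) - 1 - 2 * ((0 : ℕ) : ℝ)| = (m : ℝ) + 1 := by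
          push_cast
          rw [show ((m : ℝ) + 2 - 1 - 2 * 0) = (m : ℝ) + 1 by ring,
            abs_of_nonneg (by positivity)]
        have h1 : ∀ i : ℕ, |((m + 2 : ℕ) : ℝ) - 1 - 2 * ((i + 1 : ℕ) : ℝ)|
            = |((m : ℕ) : ℝ) - 1 - 2 * i| := by
          intro i; push_cast; congr 1; ring
        rw [h0, Finset.sum_congr rfl fun i _ => h1 i, Finset.sum_range_succ]
        have h2 : |((m : ℕ) : ℝ) - 1 - 2 * (m : ℝ)| = (m : ℝ) + 1 := by
          rw [show ((m : ℕ) : ℝ) - 1 - 2 * (m : ℝ) = -((m : ℝ) + 1) by push_cast; ring,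
            abs_neg, abs_of_nonneg (by positivity)]
        rw [h2]; ring
      have hm := ih m (by omega)
      rw [key]
      push_cast
      nlinarith [hm]

lemma slope_lt {a b : ℝ} (ha : 0 < a) (hab : a < b) :
    (Real.exp a - 1) * b < (Real.exp b - 1) * a := by
  have hb : 0 < b := ha.trans hab
  have h := strictConvexOn_exp.2 (Set.mem_univ (0 : ℝ)) (Set.mem_univ b)
      (by intro h; exact absurd h.symm (ne_of_gt hb))
      (show 0 < 1 - a / b by
        rw [sub_pos, div_lt_one hb]; exact hab)
      (show 0 < a / b by positivity)
      (by ring)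
  simp only [smul_eq_mul, mul_zero, zero_add, Real.exp_zero, mul_one] at h
  rw [show a / b * b = a by field_simp] at h
  have h2 := mul_lt_mul_of_pos_right h hb
  have h3 : (1 - a / b + a / b * Real.exp b) * b = b - a + a * Real.exp b := by
    field_simp
  rw [h3] at h2
  nlinarith [h2]

lemma slope_le {a b : ℝ} (ha : 0 < a) (hab : a ≤ b) :
    (Real.exp a - 1) * b ≤ (Real.exp b - 1) * a := by
  rcases eq_or_lt_of_le hab with rfl | h
  · ring_nf; exact le_refl _
  · exact (slope_lt ha h).le

lemma expbound {B : ℝ} (hB : 0 < B) (z : ℂ) (hz : z.re ≤ B) :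
    ‖Complex.exp z - 1‖ ≤ (Real.exp B - 1) / B * ‖z‖ := by
  set f : ℝ := (Real.exp B - 1) / B with hfdef
  have hf1 : 1 ≤ f := by
    rw [hfdef, le_div_iff₀ hB]
    nlinarith [Real.add_one_le_exp B]
  have hfB : Real.exp B ≤ f ^ 2 := by
    have hs : B < Real.exp (B / 2) - Real.exp (-(B / 2)) := by
      have h := Real.self_lt_sinh_iff.2 (half_pos hB)
      rw [Real.sinh_eq] at h
      linarith
    have e1 : Real.exp (B / 2) * Real.exp (B / 2) = Real.exp B := by
      rw [← Real.exp_add]; ring_nf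
    have e2 : Real.exp (-(B / 2)) * Real.exp (B / 2) = 1 := by
      rw [← Real.exp_add]; simp
    have hkey : B * Real.exp (B / 2) < Real.exp B - 1 := by
      nlinarith [Real.exp_pos (B / 2)]
    have h6 := mul_self_lt_mul_self (by positivity : (0:ℝ) ≤ B * Real.exp (B / 2)) hkey
    have e1' : B ^ 2 * (Real.exp (B / 2) * Real.exp (B / 2)) = B ^ 2 * Real.exp B := by
      rw [e1]
    rw [hfdef, div_pow, le_div_iff₀ (by positivity)]
    nlinarith [h6, e1']
  set x : ℝ := z.re
  set y : ℝ := z.im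
  have hex : Real.exp x ≤ f ^ 2 := le_trans (Real.exp_le_exp.2 hz) hfB
  have hx2 : (Real.exp x - 1) ^ 2 ≤ f ^ 2 * x ^ 2 := by
    rcases le_or_gt x 0 with hx | hx
    · have h1 : x + 1 ≤ Real.exp x := Real.add_one_le_exp x
      have h2 : Real.exp x ≤ 1 := Real.exp_le_one_iff.2 hx
      have ha : (Real.exp x - 1) ^ 2 ≤ x ^ 2 := by
        nlinarith [mul_nonneg (show (0:ℝ) ≤ Real.exp x - 1 - x by linarith)
            (show (0:ℝ) ≤ 1 - Real.exp x by linarith),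
          mul_nonneg (show (0:ℝ) ≤ -x by linarith)
            (show (0:ℝ) ≤ Real.exp x - 1 - x by linarith)]
      have hb : x ^ 2 ≤ f ^ 2 * x ^ 2 := by
        nlinarith [hf1, sq_nonneg x, sq_nonneg (f - 1)]
      linarith
    · have h := slope_le hx hz
      have hfx : Real.exp x - 1 ≤ f * x := by
        rw [hfdef]
        rw [div_mul_eq_mul_div, le_div_iff₀ hB]
        linarith [h]
      have hx0 : 0 ≤ Real.exp x - 1 := by nlinarith [Real.add_one_le_exp x]
      nlinarith [hfx, hx0]
  have hcos : 1 - y ^ 2 / 2 ≤ Real.cos y := Real.one_sub_sq_div_two_le_cos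
  have hcs : Real.cos y ^ 2 + Real.sin y ^ 2 = 1 := by
    rw [add_comm]; exact Real.sin_sq_add_cos_sq y
  have h5 : 2 * Real.exp x * (1 - Real.cos y) ≤ Real.exp x * y ^ 2 := by
    nlinarith [Real.exp_pos x]
  have expand : (Real.exp x * Real.cos y - 1) ^ 2 + (Real.exp x * Real.sin y) ^ 2
      = (Real.exp x - 1) ^ 2 + 2 * Real.exp x * (1 - Real.cos y) := by
    linear_combination (Real.exp x) ^ 2 * hcs
  have hsq : (‖Complex.exp z - 1‖) ^ 2 ≤ (f * ‖z‖) ^ 2 := by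
    rw [Complex.sq_norm, Complex.normSq_apply, mul_pow, Complex.sq_norm, Complex.normSq_apply]
    have hre : (Complex.exp z - 1).re = Real.exp x * Real.cos y - 1 := by
      simp [Complex.exp_re]; rfl
    have him : (Complex.exp z - 1).im = Real.exp x * Real.sin y := by
      simp [Complex.exp_im]; rfl
    rw [hre, him]
    have hyx : z.re * z.re + z.im * z.im = x ^ 2 + y ^ 2 := by ring
    rw [hyx]
    calc (Real.exp x * Real.cos y - 1) * (Real.exp x * Real.cos y - 1)
          + Real.exp x * Real.sin y * (Real.exp x * Real.sin y)
        = (Real.exp x - 1) ^ 2 + 2 * Real.exp x * (1 - Real.cos y) := by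
          linear_combination expand
      _ ≤ f ^ 2 * x ^ 2 + Real.exp x * y ^ 2 := by linarith
      _ ≤ f ^ 2 * x ^ 2 + f ^ 2 * y ^ 2 := by nlinarith [sq_nonneg y]
      _ = f ^ 2 * (x ^ 2 + y ^ 2) := by ring
  have h1 : (0 : ℝ) ≤ ‖Complex.exp z - 1‖ := norm_nonneg _
  have h2 : (0 : ℝ) ≤ f * ‖z‖ := by positivity
  nlinarith [hsq, h1, h2]

lemma absIcc (n : ℕ) : ∑ j ∈ Finset.Icc 1 n, |(n : ℝ) - 2 * j + 1| ≤ (n : ℝ) ^ 2 / 2 := by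
  have h := abssum_aux n
  have e : ∑ j ∈ Finset.Icc 1 n, |(n : ℝ) - 2 * j + 1|
      = ∑ i ∈ Finset.range n, |(n : ℝ) - 1 - 2 * i| := by
    rw [← Finset.Ico_add_one_right_eq_Icc, Finset.sum_Ico_eq_sum_range]
    norm_num
    apply Finset.sum_congr rfl
    intro i _
    push_cast
    congr 1; ring
  rw [e]; linarith

/-- Pointwise estimate for `|φ_ℓ − 1|` on the ball `B_δ`, in terms of the
logarithms `tⱼ` of the Iwasawa diagonal coordinates. -/
theorem stmt6 (n : ℕ) (hn : 2 ≤ n) (δ : ℝ) (hδ : 0 < δ) (ℓ : ℕ → ℂ)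
    (hsum : ∑ j ∈ Finset.Icc 1 n, ℓ j = 0)
    (hre : ∀ j ∈ Finset.Icc 1 n, |(ℓ j).re| < 1 / 2)
    (t : ℕ → ℝ) (ht : ∀ j ∈ Finset.Icc 1 n, |t j| ≤ δ) :
    ‖Complex.exp
          (∑ j ∈ Finset.Icc 1 n, (ℓ j + ((n : ℂ) - 2 * j + 1) / 2) * (t j : ℂ)) - 1‖
      < (4 * (Real.exp ((n * (n + 6) : ℝ) * δ / 4) - 1) / ((n : ℝ) * (n + 6))) *
          ∑ j ∈ Finset.Icc 1 n, ‖ℓ j + ((n : ℂ) - 2 * j + 1) / 2‖ := by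
  have hn2 : (2 : ℝ) ≤ (n : ℝ) := by exact_mod_cast hn
  have hnpos : (0 : ℝ) < n := by linarith
  set B : ℝ := δ * ((n : ℝ) * ((n : ℝ) + 2)) / 4 with hBdef
  set M : ℝ := (n * (n + 6) : ℝ) * δ / 4 with hMdef
  have hB : 0 < B := by rw [hBdef]; positivity
  have hM : 0 < M := by rw [hMdef]; positivity
  have hBM : B < M := by rw [hBdef, hMdef]; nlinarith
  set z : ℂ := ∑ j ∈ Finset.Icc 1 n, (ℓ j + ((n : ℂ) - 2 * j + 1) / 2) * (t j : ℂ) with hzdef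
  set S : ℝ := ∑ j ∈ Finset.Icc 1 n, ‖ℓ j + ((n : ℂ) - 2 * j + 1) / 2‖ with hSdef
  have hwre : ∀ j : ℕ, (ℓ j + ((n : ℂ) - 2 * j + 1) / 2).re
      = (ℓ j).re + ((n : ℝ) - 2 * j + 1) / 2 := by
    intro j
    have h : ((n : ℂ) - 2 * j + 1) / 2 = ((((n : ℝ) - 2 * j + 1) / 2 : ℝ) : ℂ) := by
      push_cast; ring
    rw [h, Complex.add_re, Complex.ofReal_re]
  -- real part bound
  have hzre : z.re ≤ B := by
    rw [hzdef, Complex.re_sum]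
    have hstep : ∑ j ∈ Finset.Icc 1 n, ((ℓ j + ((n : ℂ) - 2 * j + 1) / 2) * (t j : ℂ)).re
        ≤ ∑ j ∈ Finset.Icc 1 n, ((1 : ℝ) / 2 + |(n : ℝ) - 2 * j + 1| / 2) * δ := by
      apply Finset.sum_le_sum
      intro j hj
      have hterm : ((ℓ j + ((n : ℂ) - 2 * j + 1) / 2) * (t j : ℂ)).re
          = (ℓ j + ((n : ℂ) - 2 * j + 1) / 2).re * t j := by
        simp [Complex.mul_re]
      rw [hterm, hwre j]
      calc ((ℓ j).re + ((n : ℝ) - 2 * j + 1) / 2) * t j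
          ≤ |((ℓ j).re + ((n : ℝ) - 2 * j + 1) / 2) * t j| := le_abs_self _
        _ = |(ℓ j).re + ((n : ℝ) - 2 * j + 1) / 2| * |t j| := abs_mul _ _
        _ ≤ ((1 : ℝ) / 2 + |(n : ℝ) - 2 * j + 1| / 2) * δ := by
            apply mul_le_mul _ (ht j hj) (abs_nonneg _) (by positivity)
            calc |(ℓ j).re + ((n : ℝ) - 2 * j + 1) / 2|
                ≤ |(ℓ j).re| + |((n : ℝ) - 2 * j + 1) / 2| := abs_add_le _ _
              _ ≤ (1 : ℝ) / 2 + |(n : ℝ) - 2 * j + 1| / 2 := by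
                  rw [abs_div, abs_two]
                  exact add_le_add (hre j hj).le (le_refl _)
    refine hstep.trans ?_
    rw [← Finset.sum_mul]
    have hcard : (Finset.Icc 1 n).card = n := by rw [Nat.card_Icc]; omega
    have hsumA : ∑ j ∈ Finset.Icc 1 n, ((1 : ℝ) / 2 + |(n : ℝ) - 2 * j + 1| / 2)
        ≤ (n : ℝ) * ((n : ℝ) + 2) / 4 := by
      rw [Finset.sum_add_distrib, Finset.sum_const, hcard, ← Finset.sum_div]
      have := absIcc n
      rw [nsmul_eq_mul]
      nlinarith
    calc (∑ j ∈ Finset.Icc 1 n, ((1 : ℝ) / 2 + |(n : ℝ) - 2 * j + 1| / 2)) * δ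
        ≤ ((n : ℝ) * ((n : ℝ) + 2) / 4) * δ := by
          exact mul_le_mul_of_nonneg_right hsumA hδ.le
      _ = B := by rw [hBdef]; ring
  -- modulus bound
  have habsz : ‖z‖ ≤ δ * S := by
    rw [hzdef]
    calc ‖∑ j ∈ Finset.Icc 1 n, (ℓ j + ((n : ℂ) - 2 * j + 1) / 2) * (t j : ℂ)‖
        ≤ ∑ j ∈ Finset.Icc 1 n,
            ‖(ℓ j + ((n : ℂ) - 2 * j + 1) / 2) * (t j : ℂ)‖ :=
          norm_sum_le _ _
      _ ≤ ∑ j ∈ Finset.Icc 1 n, ‖ℓ j + ((n : ℂ) - 2 * j + 1) / 2‖ * δ := by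
          apply Finset.sum_le_sum
          intro j hj
          rw [norm_mul, Complex.norm_real, Real.norm_eq_abs]
          exact mul_le_mul_of_nonneg_left (ht j hj) (norm_nonneg _)
      _ = δ * S := by rw [hSdef, ← Finset.sum_mul]; ring
  -- S is positive
  have h1mem : (1 : ℕ) ∈ Finset.Icc 1 n := by
    rw [Finset.mem_Icc]; omega
  have hSpos : 0 < S := by
    have hre1 := hre 1 h1mem
    have hre1' : -(1 / 2) < (ℓ 1).re := (abs_lt.1 hre1).1
    have hw1re : (ℓ 1 + ((n : ℂ) - 2 * (1 : ℕ) + 1) / 2).re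
        = (ℓ 1).re + ((n : ℝ) - 2 * (1 : ℕ) + 1) / 2 := hwre 1
    have hw1repos : 0 < (ℓ 1 + ((n : ℂ) - 2 * (1 : ℕ) + 1) / 2).re := by
      rw [hw1re]; push_cast; nlinarith
    have hw1 : ℓ 1 + ((n : ℂ) - 2 * (1 : ℕ) + 1) / 2 ≠ 0 := by
      intro h
      rw [h] at hw1repos
      simp at hw1repos
    have := Finset.single_le_sum
      (f := fun j => ‖ℓ j + ((n : ℂ) - 2 * j + 1) / 2‖)
      (fun j _ => norm_nonneg _) h1mem
    calc (0 : ℝ) < ‖ℓ 1 + ((n : ℂ) - 2 * (1 : ℕ) + 1) / 2‖ :=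
          norm_pos_iff.mpr hw1
      _ ≤ S := this
  -- final chain
  have hbd := expbound hB z hzre
  have hfBpos : 0 < (Real.exp B - 1) / B := by
    apply div_pos _ hB
    nlinarith [Real.add_one_le_exp B]
  have hflt : (Real.exp B - 1) / B < (Real.exp M - 1) / M := by
    rw [div_lt_div_iff₀ hB hM]
    have := slope_lt hB hBM
    linarith
  have hfinal : (Real.exp M - 1) / M * (δ * S)
      = 4 * (Real.exp ((n * (n + 6) : ℝ) * δ / 4) - 1) / ((n : ℝ) * (n + 6)) * S := by
    rw [hMdef]
    have hne1 : (n : ℝ) ≠ 0 := ne_of_gt hnpos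
    have hne2 : (n : ℝ) + 6 ≠ 0 := by positivity
    field_simp
  calc ‖Complex.exp z - 1‖
      ≤ (Real.exp B - 1) / B * ‖z‖ := hbd
    _ ≤ (Real.exp B - 1) / B * (δ * S) :=
        mul_le_mul_of_nonneg_left habsz hfBpos.le
    _ < (Real.exp M - 1) / M * (δ * S) :=
        mul_lt_mul_of_pos_right hflt (by positivity)
    _ = 4 * (Real.exp ((n * (n + 6) : ℝ) * δ / 4) - 1) / ((n : ℝ) * (n + 6)) * S := hfinal
end
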